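/- Assume the quadratic maximum setup: u, v : ℝ^d → ℝ are bounded Borel measurable, ε > 0, and ψ_ε(x,y) := u(x) − v(y) − ε⁻²‖x−y‖² attains a global maximum at (x̄, ȳ); set a := x̄ − ȳ and p := 2(x̄−ȳ)/ε². Let γ ∈ (0,1], C₀, C̃₀ > 0, and let j : ℝ^d × ℝ^d → ℝ^d be Borel measurable with ‖j(x,z)‖ ≤ C₀‖z‖ for all x, z, with ‖j(x,z) − j(y,z)‖ ≤ C₀‖z‖·‖x−y‖^γ for all x, y and all z ∈ B, and with ‖j(x,z) − j(y,z)‖ ≤ C̃₀‖x−y‖^γ for all x, y and all z ∉ B. Let μ be a nonnegative Borel measure on ℝ^d with ∫_B ‖z‖² dμ(z) < ∞ and μ(ℝ^d \ B) < ∞, define 𝒥[x, p, w] := ∫_{ℝ^d} ( w(x + j(x,z)) − w(x) − ⟨p, j(x,z)⟩·1_B(z) ) dμ(z), and assume the defining integrands are μ-integrable. Then for every δ ∈ (0,1]: 𝒥[x̄, p, u] − 𝒥[ȳ, p, v] ≤ 2C₀²ε⁻² ∫_{B_δ} ‖z‖² dμ(z) + C₀²‖a‖^{2γ}ε⁻²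 ∫_{B \ B_δ} ‖z‖² dμ(z) + ( C̃₀²‖a‖^{2γ} + 2C̃₀‖a‖^{γ+1} ) ε⁻² μ(ℝ^d \ B). -/

import Mathlib

open MeasureTheory RealInnerProductSpace Set

/-- The Lévy–Itô integro-differential operator
`𝒥[x, p, w] = ∫ (w(x + j(x,z)) − w(x) − ⟨p, j(x,z)⟩ 1_B(z)) dμ(z)`. -/
noncomputable def levyItoOp {d : ℕ} (μ : Measure (EuclideanSpace ℝ (Fin d)))
    (j : EuclideanSpace ℝ (Fin d) → EuclideanSpace ℝ (Fin d) → EuclideanSpace ℝ (Fin d))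
    (x p : EuclideanSpace ℝ (Fin d)) (w : EuclideanSpace ℝ (Fin d) → ℝ) : ℝ :=
  ∫ z, (w (x + j x z) - w x
    - (Metric.closedBall (0 : EuclideanSpace ℝ (Fin d)) 1).indicator
        (fun z' => ⟪p, j x z'⟫) z) ∂μ

/-- **Quadratic estimates for Lévy–Itô operators (Proposition 6.7 / prop_QdrEstLI).**
In the quadratic maximum setup (`ψ_ε(x,y) = u(x) − v(y) − ε⁻²‖x−y‖²` maximal at `(x̄,ȳ)`,
`p = 2(x̄−ȳ)/ε²`), for every `δ ∈ (0,1]`,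
`𝒥[x̄,p,u] − 𝒥[ȳ,p,v] ≤ 2C₀²ε⁻²∫_{B_δ}‖z‖²dμ + C₀²‖a‖^{2γ}ε⁻²∫_{B∖B_δ}‖z‖²dμ
  + (C̃₀²‖a‖^{2γ} + 2C̃₀‖a‖^{γ+1})ε⁻²μ(Bᶜ)`. -/
theorem quadratic_estimates_levy_ito {d : ℕ}
    (u v : EuclideanSpace ℝ (Fin d) → ℝ)
    (hum : Measurable u) (hvm : Measurable v)
    (hub : ∃ C, ∀ x, |u x| ≤ C) (hvb : ∃ C, ∀ x, |v x| ≤ C)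
    (ε : ℝ) (hε : 0 < ε)
    (xb yb : EuclideanSpace ℝ (Fin d))
    (hmax : ∀ x y, u x - v y - (ε ^ 2)⁻¹ * ‖x - y‖ ^ 2
      ≤ u xb - v yb - (ε ^ 2)⁻¹ * ‖xb - yb‖ ^ 2)
    (a : EuclideanSpace ℝ (Fin d)) (ha : a = xb - yb)
    (p : EuclideanSpace ℝ (Fin d)) (hp : p = (2 / ε ^ 2) • (xb - yb))
    (γ C₀ Ct₀ : ℝ) (hγ : γ ∈ Ioc (0:ℝ) 1) (hC₀ : 0 < C₀) (hCt₀ : 0 < Ct₀)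
    (j : EuclideanSpace ℝ (Fin d) → EuclideanSpace ℝ (Fin d) → EuclideanSpace ℝ (Fin d))
    (hj : Measurable (Function.uncurry j))
    (hup : ∀ x z, ‖j x z‖ ≤ C₀ * ‖z‖)
    (hlip : ∀ x y z, z ∈ Metric.closedBall (0 : EuclideanSpace ℝ (Fin d)) 1 →
      ‖j x z - j y z‖ ≤ C₀ * ‖z‖ * ‖x - y‖ ^ γ)
    (hlip' : ∀ x y z, z ∉ Metric.closedBall (0 : EuclideanSpace ℝ (Fin d)) 1 →
      ‖j x z - j y z‖ ≤ Ct₀ * ‖x - y‖ ^ γ)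
    (μ : Measure (EuclideanSpace ℝ (Fin d)))
    (hμB : IntegrableOn (fun z => ‖z‖ ^ 2)
      (Metric.closedBall (0 : EuclideanSpace ℝ (Fin d)) 1) μ)
    (hμBc : μ (Metric.closedBall (0 : EuclideanSpace ℝ (Fin d)) 1)ᶜ ≠ ⊤)
    (hintu : Integrable (fun z => u (xb + j xb z) - u xb
      - (Metric.closedBall (0 : EuclideanSpace ℝ (Fin d)) 1).indicator
          (fun z' => ⟪p, j xb z'⟫) z) μ)
    (hintv : Integrable (fun z => v (yb + j yb z) - v yb
      - (Metric.closedBall (0 : EuclideanSpace ℝ (Fin d)) 1).indicator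
          (fun z' => ⟪p, j yb z'⟫) z) μ) :
    ∀ δ : ℝ, 0 < δ → δ ≤ 1 →
      levyItoOp μ j xb p u - levyItoOp μ j yb p v
        ≤ 2 * C₀ ^ 2 * (ε ^ 2)⁻¹ * (∫ z in Metric.closedBall 0 δ, ‖z‖ ^ 2 ∂μ)
          + C₀ ^ 2 * ‖a‖ ^ (2 * γ) * (ε ^ 2)⁻¹
              * (∫ z in Metric.closedBall 0 1 \ Metric.closedBall 0 δ, ‖z‖ ^ 2 ∂μ)
          + (Ct₀ ^ 2 * ‖a‖ ^ (2 * γ) + 2 * Ct₀ * ‖a‖ ^ (γ + 1)) * (ε ^ 2)⁻¹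
              * (μ (Metric.closedBall (0 : EuclideanSpace ℝ (Fin d)) 1)ᶜ).toReal := by
  intro δ hδ0 hδ1
  obtain ⟨hγ0, hγ1⟩ := hγ
  subst ha
  have hε2 : (0:ℝ) < ε ^ 2 := by positivity
  set c : ℝ := (ε ^ 2)⁻¹ with hc
  have hc0 : (0:ℝ) ≤ c := by positivity
  set B := Metric.closedBall (0 : EuclideanSpace ℝ (Fin d)) 1 with hBdef
  set Bδ := Metric.closedBall (0 : EuclideanSpace ℝ (Fin d)) δ with hBδdef
  have hBm : MeasurableSet B := measurableSet_closedBall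
  have hBδm : MeasurableSet Bδ := measurableSet_closedBall
  have hsub : Bδ ⊆ B := Metric.closedBall_subset_closedBall hδ1
  -- key consequence of the maximum
  have key : ∀ x y, u x - u xb - (v y - v yb) ≤ c * (‖x - y‖ ^ 2 - ‖xb - yb‖ ^ 2) := by
    intro x y
    have h := hmax x y
    rw [mul_sub]
    linarith
  have hpw : ∀ w : EuclideanSpace ℝ (Fin d), ⟪p, w⟫ = 2 * c * ⟪xb - yb, w⟫ := by
    intro w
    rw [hp, real_inner_smul_left, hc]
    ring
  have base : ∀ w₁ w₂ : EuclideanSpace ℝ (Fin d),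
      (u (xb + w₁) - u xb) - (v (yb + w₂) - v yb)
        ≤ 2 * c * ⟪xb - yb, w₁ - w₂⟫ + c * ‖w₁ - w₂‖ ^ 2 := by
    intro w₁ w₂
    have h := key (xb + w₁) (yb + w₂)
    have he : xb + w₁ - (yb + w₂) = (xb - yb) + (w₁ - w₂) := by abel
    rw [he, norm_add_sq_real] at h
    calc (u (xb + w₁) - u xb) - (v (yb + w₂) - v yb)
        ≤ c * (‖xb - yb‖ ^ 2 + 2 * ⟪xb - yb, w₁ - w₂⟫ + ‖w₁ - w₂‖ ^ 2
            - ‖xb - yb‖ ^ 2) := h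
      _ = 2 * c * ⟪xb - yb, w₁ - w₂⟫ + c * ‖w₁ - w₂‖ ^ 2 := by ring
  have joint : ∀ w₁ w₂ : EuclideanSpace ℝ (Fin d),
      (u (xb + w₁) - u xb - ⟪p, w₁⟫) - (v (yb + w₂) - v yb - ⟪p, w₂⟫)
        ≤ c * ‖w₁ - w₂‖ ^ 2 := by
    intro w₁ w₂
    have hb := base w₁ w₂
    have h12 : ⟪p, w₁⟫ - ⟪p, w₂⟫ = 2 * c * ⟪xb - yb, w₁ - w₂⟫ := by
      rw [hpw, hpw, inner_sub_right]
      ring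
    linarith
  have singleu : ∀ w : EuclideanSpace ℝ (Fin d),
      u (xb + w) - u xb - ⟪p, w⟫ ≤ c * ‖w‖ ^ 2 := by
    intro w
    have hb := base w 0
    simp only [add_zero, sub_self, sub_zero] at hb
    rw [hpw]
    linarith
  have singlev : ∀ w : EuclideanSpace ℝ (Fin d),
      -(v (yb + w) - v yb) + ⟪p, w⟫ ≤ c * ‖w‖ ^ 2 := by
    intro w
    have hb := base 0 w
    simp only [add_zero, sub_self, zero_sub, sub_zero] at hb
    rw [inner_neg_right, norm_neg] at hb
    rw [hpw]
    linarith
  have hjx2 : ∀ x z : EuclideanSpace ℝ (Fin d), ‖j x z‖ ^ 2 ≤ C₀ ^ 2 * ‖z‖ ^ 2 := by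
    intro x z
    have h := hup x z
    nlinarith [norm_nonneg (j x z), norm_nonneg z]
  have h2γ : ‖xb - yb‖ ^ (2 * γ) = (‖xb - yb‖ ^ γ) ^ 2 := by
    rw [mul_comm, Real.rpow_mul (norm_nonneg _), ← Real.rpow_natCast (‖xb - yb‖ ^ γ) 2]
    norm_num
  have hγ1pow : ‖xb - yb‖ ^ (γ + 1) = ‖xb - yb‖ ^ γ * ‖xb - yb‖ := by
    rw [Real.rpow_add' (norm_nonneg _) (by positivity), Real.rpow_one]
  set FG : EuclideanSpace ℝ (Fin d) → ℝ := fun z =>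
    (u (xb + j xb z) - u xb - B.indicator (fun z' => ⟪p, j xb z'⟫) z)
      - (v (yb + j yb z) - v yb - B.indicator (fun z' => ⟪p, j yb z'⟫) z) with hFG
  have hI : Integrable FG μ := hintu.sub hintv
  -- pointwise bounds
  have pt1 : ∀ z ∈ Bδ, FG z ≤ 2 * C₀ ^ 2 * c * ‖z‖ ^ 2 := by
    intro z hz
    have hzB : z ∈ B := hsub hz
    simp only [hFG, indicator_of_mem hzB]
    have h1 := singleu (j xb z)
    have h2 := singlev (j yb z)
    have h3 := mul_le_mul_of_nonneg_left (hjx2 xb z) hc0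
    have h4 := mul_le_mul_of_nonneg_left (hjx2 yb z) hc0
    linarith
  have pt2 : ∀ z ∈ B \ Bδ, FG z ≤ C₀ ^ 2 * ‖xb - yb‖ ^ (2 * γ) * c * ‖z‖ ^ 2 := by
    intro z hz
    obtain ⟨hzB, -⟩ := hz
    simp only [hFG, indicator_of_mem hzB]
    have h1 := joint (j xb z) (j yb z)
    have hΔ := hlip xb yb z hzB
    have hΔ2 : ‖j xb z - j yb z‖ ^ 2 ≤ (C₀ * ‖z‖ * ‖xb - yb‖ ^ γ) ^ 2 :=
      pow_le_pow_left₀ (norm_nonneg _) hΔ 2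
    have h3 := mul_le_mul_of_nonneg_left hΔ2 hc0
    rw [h2γ]
    nlinarith [h1, h3]
  have pt3 : ∀ z ∈ Bᶜ, FG z
      ≤ (Ct₀ ^ 2 * ‖xb - yb‖ ^ (2 * γ) + 2 * Ct₀ * ‖xb - yb‖ ^ (γ + 1)) * c := by
    intro z hz
    simp only [hFG, indicator_of_notMem (Set.notMem_of_mem_compl hz), sub_zero]
    have hb := base (j xb z) (j yb z)
    have hΔ := hlip' xb yb z (Set.notMem_of_mem_compl hz)
    have hA : ⟪xb - yb, j xb z - j yb z⟫ ≤ ‖xb - yb‖ * (Ct₀ * ‖xb - yb‖ ^ γ) :=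
      (real_inner_le_norm _ _).trans
        (mul_le_mul_of_nonneg_left hΔ (norm_nonneg _))
    have hΔ2 : ‖j xb z - j yb z‖ ^ 2 ≤ (Ct₀ * ‖xb - yb‖ ^ γ) ^ 2 :=
      pow_le_pow_left₀ (norm_nonneg _) hΔ 2
    have h3 := mul_le_mul_of_nonneg_left hΔ2 hc0
    have h4 := mul_le_mul_of_nonneg_left hA (by linarith : (0:ℝ) ≤ 2 * c)
    rw [h2γ, hγ1pow]
    nlinarith [hb, h3, h4]
  -- assemble the integral bounds
  have b1 : ∫ z in Bδ, FG z ∂μ ≤ 2 * C₀ ^ 2 * c * ∫ z in Bδ, ‖z‖ ^ 2 ∂μ := by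
    have hint1 : IntegrableOn (fun z => 2 * C₀ ^ 2 * c * ‖z‖ ^ 2) Bδ μ :=
      (hμB.mono_set hsub).const_mul _
    exact (setIntegral_mono_on hI.integrableOn hint1 hBδm pt1).trans_eq
      (integral_const_mul _ _)
  have b2 : ∫ z in B \ Bδ, FG z ∂μ
      ≤ C₀ ^ 2 * ‖xb - yb‖ ^ (2 * γ) * c * ∫ z in B \ Bδ, ‖z‖ ^ 2 ∂μ := by
    have hint2 : IntegrableOn (fun z => C₀ ^ 2 * ‖xb - yb‖ ^ (2 * γ) * c * ‖z‖ ^ 2)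
        (B \ Bδ) μ := (hμB.mono_set Set.diff_subset).const_mul _
    exact (setIntegral_mono_on hI.integrableOn hint2 (hBm.diff hBδm) pt2).trans_eq
      (integral_const_mul _ _)
  have b3 : ∫ z in Bᶜ, FG z ∂μ
      ≤ (Ct₀ ^ 2 * ‖xb - yb‖ ^ (2 * γ) + 2 * Ct₀ * ‖xb - yb‖ ^ (γ + 1)) * c
          * (μ Bᶜ).toReal := by
    have hint3 : IntegrableOn
        (fun _ : EuclideanSpace ℝ (Fin d) =>
          (Ct₀ ^ 2 * ‖xb - yb‖ ^ (2 * γ) + 2 * Ct₀ * ‖xb - yb‖ ^ (γ + 1)) * c) Bᶜ μ :=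
      integrableOn_const hμBc
    have h := setIntegral_mono_on hI.integrableOn hint3 hBm.compl pt3
    rw [setIntegral_const, smul_eq_mul, measureReal_def] at h
    linarith [h]
  have e0 : levyItoOp μ j xb p u - levyItoOp μ j yb p v = ∫ z, FG z ∂μ := by
    simp only [levyItoOp, hFG]
    rw [← integral_sub hintu hintv]
  have hu' := setIntegral_union (μ := μ) (f := FG) disjoint_sdiff_self_right
    (hBm.diff hBδm) hI.integrableOn hI.integrableOn
  rw [union_diff_cancel hsub] at hu'
  have hsplit : ∫ z, FG z ∂μ
      = (∫ z in Bδ, FG z ∂μ + ∫ z in B \ Bδ, FG z ∂μ) + ∫ z in Bᶜ, FG z ∂μ := by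
    rw [← integral_add_compl hBm hI, hu']
  rw [e0, hsplit]
  linarith
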